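/- arXiv:2411.00343 — 5 statements merged into one kernel-verified Lean document; each statement's English description precedes it below -/
import Mathlib

section
/- For any graph G and any partition {V₁, V₂} of V(G), the graph G⁺ is contained in G[V₁]⁺ ⊠ G[V₂]⁺. -/
open SimpleGraph

/-- `H` is isomorphic to a subgraph of `G`. -/
def Contains {α β : Type} (H : SimpleGraph α) (G : SimpleGraph β) : Prop :=
  ∃ f : α ↪ β, ∀ ⦃u v⦄, H.Adj u v → G.Adj (f u) (f v)

/-- The strong product of two graphs. -/
def StrongProd {α β : Type} (G : SimpleGraph α) (H : SimpleGraph β) :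
    SimpleGraph (α × β) where
  Adj x y := x ≠ y ∧ (x.1 = y.1 ∨ G.Adj x.1 y.1) ∧ (x.2 = y.2 ∨ H.Adj x.2 y.2)
  symm := ⟨by
    rintro x y ⟨h1, h2, h3⟩
    exact ⟨h1.symm, h2.imp Eq.symm SimpleGraph.Adj.symm, h3.imp Eq.symm SimpleGraph.Adj.symm⟩⟩
  loopless := ⟨fun x h => h.1 rfl⟩

/-- `H` is a minor of `G`, witnessed by disjoint connected branch sets. -/
def IsMinorOf {α β : Type} (H : SimpleGraph α) (G : SimpleGraph β) : Prop :=
  ∃ B : α → Set β,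
    (∀ a, (G.induce (B a)).Connected) ∧
    (Pairwise fun a b => Disjoint (B a) (B b)) ∧
    (∀ ⦃a b⦄, H.Adj a b → ∃ x ∈ B a, ∃ y ∈ B b, G.Adj x y)

/-- A graph is planar iff it has no `K₅` minor and no `K₃,₃` minor (Wagner's theorem). -/
def IsPlanar {α : Type} (G : SimpleGraph α) : Prop :=
  ¬ IsMinorOf (completeGraph (Fin 5)) G ∧
  ¬ IsMinorOf (completeBipartiteGraph (Fin 3) (Fin 3)) G

/-- `G` has a tree-decomposition of width at most `k`. -/
def HasTreewidthLE {α : Type} (G : SimpleGraph α) (k : ℕ) : Prop :=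
  ∃ (ι : Type) (T : SimpleGraph ι) (B : ι → Set α),
    T.IsTree ∧
    (∀ ⦃u v⦄, G.Adj u v → ∃ i, u ∈ B i ∧ v ∈ B i) ∧
    (∀ v, (T.induce {i | v ∈ B i}).Connected) ∧
    (∀ i, (B i).Finite ∧ (B i).ncard ≤ k + 1)

/-- `G` has a path-decomposition of width at most `k`. -/
def HasPathwidthLE {α : Type} (G : SimpleGraph α) (k : ℕ) : Prop :=
  ∃ (m : ℕ) (B : Fin m → Set α),
    (∀ ⦃u v⦄, G.Adj u v → ∃ i, u ∈ B i ∧ v ∈ B i) ∧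
    (∀ v, ∃ i, v ∈ B i) ∧
    (∀ v (i j l : Fin m), i ≤ j → j ≤ l → v ∈ B i → v ∈ B l → v ∈ B j) ∧
    (∀ i, (B i).Finite ∧ (B i).ncard ≤ k + 1)

/-- The quotient of `G` by a family of sets of vertices: vertices are the members of `P`,
two parts being adjacent iff some pair of representatives is adjacent in `G`. -/
def QuotientGraph {α : Type} (G : SimpleGraph α) (P : Set (Set α)) :
    SimpleGraph P where
  Adj A B := A ≠ B ∧ ∃ a ∈ (A : Set α), ∃ b ∈ (B : Set α), G.Adj a b
  symm := ⟨by
    rintro A B ⟨h1, a, ha, b, hb, hab⟩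
    exact ⟨h1.symm, b, hb, a, ha, hab.symm⟩⟩
  loopless := ⟨fun A h => h.1 rfl⟩

/-- A partition of the vertices of `G` is a tree-partition if the quotient graph is
contained in a tree. -/
def IsTreePartition {α : Type} (G : SimpleGraph α) (P : Set (Set α)) : Prop :=
  Setoid.IsPartition P ∧
  ∃ (ι : Type) (T : SimpleGraph ι), T.IsTree ∧ Contains (QuotientGraph G P) T

/-- A matching: a set of edges of `G`, pairwise not sharing a vertex. -/
def IsMatchingSet {α : Type} (G : SimpleGraph α) (M : Set (Sym2 α)) : Prop :=
  M ⊆ G.edgeSet ∧ M.Pairwise fun e f => ∀ v, v ∈ e → v ∉ f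

/-- The parts obtained from a matching: matched pairs and singletons of unmatched vertices. -/
def matchingParts {α : Type} (M : Set (Sym2 α)) : Set (Set α) :=
  {S | (∃ e ∈ M, S = {x | x ∈ e}) ∨ ∃ v, (∀ e ∈ M, v ∉ e) ∧ S = {v}}

/-- The graph `G/M` obtained by contracting each edge of a matching `M`. -/
def ContractMatching {α : Type} (G : SimpleGraph α) (M : Set (Sym2 α)) :
    SimpleGraph (matchingParts M) :=
  QuotientGraph G (matchingParts M)

/-- A graph is a path graph if it is isomorphic to `pathGraph n` for some `n`. -/
def IsPathGraph {α : Type} (G : SimpleGraph α) : Prop :=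
  ∃ n : ℕ, Nonempty (G ≃g SimpleGraph.pathGraph n)

/-- A graph in which every cycle is a triangle. -/
def IsTriangleForest {α : Type} (G : SimpleGraph α) : Prop :=
  ∀ (v : α) (w : G.Walk v v), w.IsCycle → w.length = 3

/-- `G` is `k`-apex: removing at most `k` vertices leaves a planar graph. -/
def IsKApex {α : Type} (G : SimpleGraph α) (k : ℕ) : Prop :=
  ∃ A : Set α, A.ncard ≤ k ∧ IsPlanar (G.induce Aᶜ)

/-- `G` is an apex-forest: removing at most one vertex leaves a forest. -/
def IsApexForest {α : Type} (G : SimpleGraph α) : Prop :=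
  ∃ A : Set α, A.ncard ≤ 1 ∧ (G.induce Aᶜ).IsAcyclic

/-- `G⁺`: the graph `G` together with one new dominant vertex. -/
def AddDominant {α : Type} (G : SimpleGraph α) : SimpleGraph (Option α) where
  Adj x y := match x, y with
    | some a, some b => G.Adj a b
    | some _, none => True
    | none, some _ => True
    | none, none => False
  symm := ⟨by rintro (_|a) (_|b) h <;> simp_all [SimpleGraph.Adj.symm, adj_symm]⟩
  loopless := ⟨by rintro (_|a) h <;> simp_all⟩

/-- `G'` is a distension of `G`: for each edge `vw` of `G`, a non-empty path, complete
to `{v, w}`, is added, with the added paths disjoint from `G` and from each other. -/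
def IsDistension {α β : Type} (G : SimpleGraph α) (G' : SimpleGraph β) : Prop :=
  ∃ (g : α ↪ β) (f : β → Sym2 α),
    (∀ u v : α, G'.Adj (g u) (g v) ↔ G.Adj u v) ∧
    (∀ w : β, w ∉ Set.range g → f w ∈ G.edgeSet) ∧
    (∀ w : β, w ∉ Set.range g → ∀ v : α, (G'.Adj w (g v) ↔ v ∈ f w)) ∧
    (∀ w w' : β, w ∉ Set.range g → w' ∉ Set.range g → G'.Adj w w' → f w = f w') ∧
    (∀ e ∈ G.edgeSet, {w : β | w ∉ Set.range g ∧ f w = e}.Nonempty ∧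
      IsPathGraph (G'.induce {w : β | w ∉ Set.range g ∧ f w = e}))

/-- For any graph `G` and any partition `{V₁, V₂}` of `V(G)`, the graph `G⁺` is contained
in `G[V₁]⁺ ⊠ G[V₂]⁺`. -/
theorem stmt2 {V : Type} [Fintype V] (G : SimpleGraph V) (V₁ V₂ : Set V)
    (hdisj : Disjoint V₁ V₂) (hunion : V₁ ∪ V₂ = Set.univ) :
    Contains (AddDominant G)
      (StrongProd (AddDominant (G.induce V₁)) (AddDominant (G.induce V₂))) := by
  classical
  have hmem : ∀ v : V, v ∉ V₁ → v ∈ V₂ := by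
    intro v hv
    have : v ∈ V₁ ∪ V₂ := hunion ▸ Set.mem_univ v
    exact this.resolve_left hv
  let F : Option V → Option V₁ × Option V₂ := fun x =>
    match x with
    | none => (none, none)
    | some v => if h : v ∈ V₁ then (some ⟨v, h⟩, none) else (none, some ⟨v, hmem v h⟩)
  have hinj : Function.Injective F := by
    rintro (_|u) (_|v) h <;> simp only [F] at h
    · rfl
    · split_ifs at h <;> simp_all
    · split_ifs at h <;> simp_all
    · split_ifs at h <;> simp_all
  refine ⟨⟨F, hinj⟩, ?_⟩
  rintro (_|u) (_|v) h
  · exact absurd h (by simp [AddDominant])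
  all_goals
    show _ ≠ _ ∧ _ ∧ _
    refine ⟨fun he => ?_, ?_, ?_⟩
  · exact (AddDominant G).ne_of_adj h (hinj he)
  · by_cases hv : v ∈ V₁ <;> simp [F, hv, AddDominant]
  · by_cases hv : v ∈ V₁ <;> simp [F, hv, AddDominant]
  · exact (AddDominant G).ne_of_adj h (hinj he)
  · by_cases hu : u ∈ V₁ <;> simp [F, hu, AddDominant]
  · by_cases hu : u ∈ V₁ <;> simp [F, hu, AddDominant]
  · exact (AddDominant G).ne_of_adj h (hinj he)
  · have hG : G.Adj u v := h
    by_cases hu : u ∈ V₁ <;> by_cases hv : v ∈ V₁ <;>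
      simp [F, hu, hv, AddDominant, comap_adj, hG]
  · have hG : G.Adj u v := h
    by_cases hu : u ∈ V₁ <;> by_cases hv : v ∈ V₁ <;>
      simp [F, hu, hv, AddDominant, comap_adj, hG]
end

section
/- If M is a matching in a graph G, then G is contained in (G/M) ⊠ K₂. -/
open SimpleGraph

open Classical in
noncomputable def partOf {α : Type} (M : Set (Sym2 α)) (v : α) : Set α :=
  if h : ∃ e ∈ M, v ∈ e then {x | x ∈ h.choose} else {v}

lemma partOf_mem_parts {α : Type} (M : Set (Sym2 α)) (v : α) :
    partOf M v ∈ matchingParts M := by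
  unfold partOf
  split
  · next h => exact Or.inl ⟨h.choose, h.choose_spec.1, rfl⟩
  · next h => exact Or.inr ⟨v, fun e he hv => h ⟨e, he, hv⟩, rfl⟩

lemma mem_partOf {α : Type} (M : Set (Sym2 α)) (v : α) : v ∈ partOf M v := by
  unfold partOf
  split
  · next h => exact h.choose_spec.2
  · exact rfl

lemma partOf_cases {α : Type} {M : Set (Sym2 α)} {u v : α} (h : u ∈ partOf M v)
    (hne : u ≠ v) : s(u, v) ∈ M := by
  unfold partOf at h
  split at h
  · next hh =>
    have h1 : u ∈ hh.choose := h
    have h2 : v ∈ hh.choose := hh.choose_spec.2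
    have := (Sym2.mem_and_mem_iff hne).mp ⟨h1, h2⟩
    rw [← this]; exact hh.choose_spec.1
  · exact absurd h hne

open Classical in
noncomputable def sndOf {α : Type} (M : Set (Sym2 α)) (k : α → ℕ) (v : α) : Fin 2 :=
  if ∃ w, s(v, w) ∈ M ∧ k w < k v then 1 else 0

lemma partner_unique {α : Type} {M : Set (Sym2 α)}
    (hP : M.Pairwise fun e f => ∀ x, x ∈ e → x ∉ f) {u v w : α}
    (hv : s(u, v) ∈ M) (hw : s(u, w) ∈ M) : w = v := by
  by_cases heq : s(u, v) = s(u, w)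
  · exact (Sym2.congr_right.mp heq).symm
  · exact absurd (Sym2.mem_mk_left u w) (hP hv hw heq u (Sym2.mem_mk_left u v))

lemma sndOf_ne {α : Type} {M : Set (Sym2 α)} {k : α → ℕ} (hk : Function.Injective k)
    (hP : M.Pairwise fun e f => ∀ x, x ∈ e → x ∉ f) {u v : α}
    (hm : s(u, v) ∈ M) (hne : u ≠ v) : sndOf M k u ≠ sndOf M k v := by
  have h1 : sndOf M k u = if k v < k u then 1 else 0 := by
    unfold sndOf
    congr 1
    simp only [eq_iff_iff]
    constructor
    · rintro ⟨w, hw, hlt⟩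
      rwa [partner_unique hP hm hw] at hlt
    · exact fun h => ⟨v, hm, h⟩
  have h2 : sndOf M k v = if k u < k v then 1 else 0 := by
    unfold sndOf
    congr 1
    simp only [eq_iff_iff]
    constructor
    · rintro ⟨w, hw, hlt⟩
      have : w = u := partner_unique hP (Sym2.eq_swap ▸ hm) hw
      rwa [this] at hlt
    · exact fun h => ⟨u, Sym2.eq_swap ▸ hm, h⟩
  have hkne : k u ≠ k v := fun h => hne (hk h)
  rcases lt_or_gt_of_ne hkne with h | h
  · rw [h1, h2, if_neg (not_lt.mpr h.le), if_pos h]; decide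
  · rw [h1, h2, if_pos h, if_neg (not_lt.mpr h.le)]; decide

/-- If `M` is a matching in a graph `G`, then `G` is contained in `(G/M) ⊠ K₂`. -/
theorem stmt8 {V : Type} [Fintype V] (G : SimpleGraph V) (M : Set (Sym2 V))
    (hM : IsMatchingSet G M) :
    Contains G (StrongProd (ContractMatching G M) (completeGraph (Fin 2))) := by
  classical
  obtain ⟨hE, hP⟩ := hM
  set k : V → ℕ := fun v => (Fintype.equivFin V v : ℕ) with hkdef
  have hk : Function.Injective k := fun a b h => by
    apply (Fintype.equivFin V).injective
    exact Fin.ext h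
  have key : ∀ u v : V, u ≠ v → partOf M u = partOf M v → s(u, v) ∈ M := by
    intro u v hne hpe
    exact partOf_cases (hpe ▸ mem_partOf M u) hne
  refine ⟨⟨fun v => (⟨partOf M v, partOf_mem_parts M v⟩, sndOf M k v), ?_⟩, ?_⟩
  · intro u v h
    by_contra hne
    have h1 : partOf M u = partOf M v := congrArg (fun x => (x.1 : Set V)) h
    have h2 : sndOf M k u = sndOf M k v := congrArg Prod.snd h
    exact sndOf_ne hk hP (key u v hne h1) hne h2
  · intro u v huv
    have hne : u ≠ v := huv.ne
    refine ⟨?_, ?_, ?_⟩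
    · intro h
      have h1 : partOf M u = partOf M v := congrArg (fun x => (x.1 : Set V)) h
      have h2 : sndOf M k u = sndOf M k v := congrArg Prod.snd h
      exact sndOf_ne hk hP (key u v hne h1) hne h2
    · by_cases hpe : partOf M u = partOf M v
      · exact Or.inl (Subtype.ext hpe)
      · exact Or.inr ⟨fun h => hpe (congrArg Subtype.val h),
          u, mem_partOf M u, v, mem_partOf M v, huv⟩
    · by_cases hs : sndOf M k u = sndOf M k v
      · exact Or.inl hs
      · exact Or.inr hs
end

section
/- Let c be a positive integer, let F be a fan on at least c² + c + 1 vertices with centre v₁, and let 𝒫, 𝒬 be partitions of F such that 𝒫 is a tree-partition and |P ∩ Q| ≤ c for all P ∈ 𝒫 and Q ∈ 𝒬. Then there exists a vertex v₂ of F − v₁ whose part in 𝒬 differs from the part of 𝒬 containing v₁. -/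
open SimpleGraph

lemma tree_no_triangle' {ι : Type} {T : SimpleGraph ι} (hT : T.IsAcyclic)
    {a b c : ι} (hab : T.Adj a b) (hbc : T.Adj b c) (hca : T.Adj c a) : False := by
  have hac : a ≠ c := hca.ne'
  refine hT (Walk.cons hab (Walk.cons hbc (Walk.cons hca Walk.nil))) ?_
  simp [Walk.isCycle_def, Walk.isTrail_def, hab.ne, hbc.ne, hca.ne, hac,
    hab.ne', hbc.ne', hca.ne', Sym2.eq, Sym2.rel_iff']

/-- For a fan `F` on at least `c² + c + 1` vertices with centre `v₁`, and partitions
`𝒫, 𝒬` of `F` with `𝒫` a tree-partition and `|P ∩ Q| ≤ c` for all `P ∈ 𝒫`, `Q ∈ 𝒬`,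
there is a vertex `v₂ ≠ v₁` whose part in `𝒬` differs from that of `v₁`. -/
theorem stmt10 {V : Type} [Fintype V] (c : ℕ) (hc : 1 ≤ c)
    (F : SimpleGraph V) (hcard : c ^ 2 + c + 1 ≤ Fintype.card V)
    (v₁ : V) (hdom : ∀ w, w ≠ v₁ → F.Adj v₁ w)
    (hpath : IsPathGraph (F.induce {w | w ≠ v₁}))
    (P Q : Set (Set V)) (hP : IsTreePartition F P) (hQ : Setoid.IsPartition Q)
    (hPQ : ∀ p ∈ P, ∀ q ∈ Q, (p ∩ q).ncard ≤ c) :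
    ∃ v₂, v₂ ≠ v₁ ∧ ∀ q ∈ Q, v₁ ∈ q → v₂ ∉ q := by
  classical
  by_contra hcon
  push_neg at hcon
  -- the Q-part of v₁ is everything
  obtain ⟨q₀, ⟨hq₀Q, hv₁q₀⟩, hq₀u⟩ := hQ.2 v₁
  have huniv : ∀ v : V, v ∈ q₀ := by
    intro v
    by_cases hv : v = v₁
    · exact hv ▸ hv₁q₀
    · obtain ⟨q, hqQ, hv₁q, hvq⟩ := hcon v hv
      exact (hq₀u q ⟨hqQ, hv₁q⟩) ▸ hvq
  obtain ⟨hPpart, ι, T, hT, f, hf⟩ := hP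
  -- part function for P
  have hPv := hPpart.2
  have hex : ∀ v : V, ∃ b, (b ∈ P ∧ v ∈ b) ∧ ∀ y, y ∈ P → v ∈ y → y = b := by
    intro v
    obtain ⟨b, ⟨hbP, hvb⟩, hbu⟩ := hPv v
    exact ⟨b, ⟨hbP, hvb⟩, fun y hy hvy => hbu y ⟨hy, hvy⟩⟩
  choose pt hpt hptu using hex
  have hptP : ∀ v, pt v ∈ P := fun v => (hpt v).1
  have hptmem : ∀ v, v ∈ pt v := fun v => (hpt v).2
  -- every P-part has size at most c
  have hsize : ∀ p ∈ P, p.ncard ≤ c := by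
    intro p hp
    have := hPQ p hp q₀ hq₀Q
    rwa [Set.inter_eq_self_of_subset_left (fun x _ => huniv x)] at this
  -- the path
  obtain ⟨n, ⟨e⟩⟩ := hpath
  have hn : c ^ 2 + c ≤ n := by
    have h1 : Fintype.card ↥{w : V | w ≠ v₁} = n :=
      (Fintype.card_congr e.toEquiv).trans (Fintype.card_fin n)
    have h2 : Fintype.card ↥{w : V | w ≠ v₁} = Fintype.card {w : V // ¬ (w = v₁)} :=
      Fintype.card_congr (Equiv.refl _)
    rw [h2, Fintype.card_subtype_compl, Fintype.card_subtype_eq] at h1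
    omega
  set ver : Fin n → V := fun i => ((e.symm i : ↥{w : V | w ≠ v₁}) : V) with hver
  have hvne : ∀ i, ver i ≠ v₁ := fun i => (e.symm i).2
  have hvinj : Function.Injective ver := fun i j h => by
    exact e.symm.toEquiv.injective (Subtype.val_injective h)
  have hvadj : ∀ i j : Fin n, (i:ℕ)+1 = (j:ℕ) → F.Adj (ver i) (ver j) := by
    intro i j hij
    exact e.symm.map_adj_iff.mpr (pathGraph_adj.mpr (Or.inl hij))
  set p₁ : Set V := pt v₁ with hp₁
  have hv₁p₁ : v₁ ∈ p₁ := hptmem v₁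
  -- few path vertices lie in p₁
  set S : Finset (Fin n) := Finset.univ.filter (fun i => ver i ∈ p₁) with hS
  have hfin : p₁.Finite := Set.toFinite _
  have hSc : S.card + 1 ≤ c := by
    have hsub : S.card ≤ (hfin.toFinset.erase v₁).card := by
      apply Finset.card_le_card_of_injOn ver
      · intro i hi
        simp only [hS, Finset.mem_filter] at hi
        exact Finset.mem_erase.mpr ⟨hvne i, hfin.mem_toFinset.mpr (by simpa [List.mem_filter] using hi)⟩
      · exact fun i _ j _ h => hvinj h
    have hers := Finset.card_erase_of_mem (hfin.mem_toFinset.mpr hv₁p₁)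
    rw [hers] at hsub
    have hle : hfin.toFinset.card ≤ c := by
      rw [← Set.ncard_eq_toFinset_card p₁ hfin]
      exact hsize p₁ (hptP v₁)
    have hpos : 1 ≤ hfin.toFinset.card :=
      Finset.card_pos.mpr ⟨v₁, hfin.mem_toFinset.mpr hv₁p₁⟩
    omega
  -- index bound
  have hidx : ∀ k m : ℕ, k < c → m ≤ c → (c+1)*k + m < n := by
    intro k m hk hm
    have h1 : (c+1)*(k+1) ≤ (c+1)*c := Nat.mul_le_mul_left _ (by omega)
    have h2 : (c+1)*c = c^2 + c := by ring
    have h3 : (c+1)*k + m < (c+1)*(k+1) := by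
      rw [Nat.mul_add, Nat.mul_one]
      omega
    omega
  -- a run of c+1 consecutive path vertices avoiding p₁
  have hrun : ∃ k, k < c ∧ ∀ m, m ≤ c → ∀ (h : (c+1)*k + m < n),
      ver ⟨(c+1)*k + m, h⟩ ∉ p₁ := by
    by_contra hfail
    push_neg at hfail
    have hfail' : ∀ k : Fin c, ∃ i : Fin n, i ∈ S ∧ (i:ℕ)/(c+1) = (k:ℕ) := by
      intro k
      obtain ⟨m, hm, h, hmem⟩ := hfail k k.2
      refine ⟨⟨(c+1)*k + m, h⟩, ?_, ?_⟩
      · simp only [hS, Finset.mem_filter]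
        exact ⟨Finset.mem_univ _, hmem⟩
      · simp only
        rw [Nat.mul_add_div (by omega), Nat.div_eq_of_lt (by omega)]
        omega
    choose g hgS hgd using hfail'
    have hginj : Function.Injective g := by
      intro k k' h
      apply Fin.ext
      rw [← hgd k, ← hgd k', h]
    have := Finset.card_le_card_of_injOn (s := (Finset.univ : Finset (Fin c)))
      (t := S) g (fun k _ => hgS k) (fun k _ k' _ h => hginj h)
    simp at this
    omega
  obtain ⟨k, hk, hkrun⟩ := hrun
  -- the c+1 run vertices
  set nu : ℕ → Fin n := fun m => ⟨(c+1)*k + min m c, hidx k (min m c) hk (min_le_right _ _)⟩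
    with hnu
  have hnup : ∀ m, m ≤ c → ver (nu m) ∉ p₁ := by
    intro m hm
    have : min m c = m := min_eq_left hm
    have h2 := hkrun (min m c) (min_le_right _ _) (hidx k (min m c) hk (min_le_right _ _))
    exact h2
  -- two consecutive run vertices lie in different P-parts
  have hdiff : ∃ m, m < c ∧ pt (ver (nu m)) ≠ pt (ver (nu (m+1))) := by
    by_contra hall
    push_neg at hall
    have hsame : ∀ m, m ≤ c → pt (ver (nu m)) = pt (ver (nu 0)) := by
      intro m
      induction m with
      | zero => intro _; rfl
      | succ m ih =>
        intro hm
        rw [← hall m (by omega)]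
        exact ih (by omega)
    have himg : ∀ m : Fin (c+1), ver (nu m) ∈ pt (ver (nu 0)) := by
      intro m
      rw [← hsame m (by omega)]
      exact hptmem _
    have hninj : Function.Injective (fun m : Fin (c+1) => ver (nu (m:ℕ))) := by
      intro m m' h
      have h2 := congrArg Fin.val (hvinj h)
      simp only [hnu] at h2
      have hm : min (m:ℕ) c = (m:ℕ) := min_eq_left (by omega)
      have hm' : min (m':ℕ) c = (m':ℕ) := min_eq_left (by omega)
      apply Fin.ext
      omega
    have hcard := Finset.card_image_of_injective (Finset.univ : Finset (Fin (c+1))) hninj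
    have hsub : ↑(Finset.univ.image (fun m : Fin (c+1) => ver (nu (m:ℕ)))) ⊆
        pt (ver (nu 0)) := by
      intro x hx
      simp only [Finset.coe_image, Set.mem_image] at hx
      obtain ⟨m, _, rfl⟩ := hx
      exact himg m
    have hle := Set.ncard_le_ncard hsub (Set.toFinite _)
    rw [Set.ncard_coe_finset, hcard] at hle
    have := hsize _ (hptP (ver (nu 0)))
    simp at hle
    omega
  obtain ⟨m, hm, hne⟩ := hdiff
  have hadjuu' : F.Adj (ver (nu m)) (ver (nu (m+1))) := by
    apply hvadj
    simp only [hnu]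
    rw [min_eq_left (by omega), min_eq_left (by omega)]
    omega
  have hAne : pt (ver (nu m)) ≠ p₁ := by
    intro h
    exact hnup m (by omega) (h ▸ hptmem (ver (nu m)))
  have hBne : pt (ver (nu (m+1))) ≠ p₁ := by
    intro h
    exact hnup (m+1) (by omega) (h ▸ hptmem (ver (nu (m+1))))
  have qadj : ∀ (a b : V), F.Adj a b → pt a ≠ pt b →
      (QuotientGraph F P).Adj ⟨pt a, hptP a⟩ ⟨pt b, hptP b⟩ := by
    intro a b hab hab'
    show _ ≠ _ ∧ _
    exact ⟨fun h => hab' (congrArg Subtype.val h), a, hptmem a, b, hptmem b, hab⟩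
  have t1 := hf (qadj _ _ hadjuu' hne)
  have t2 := hf (qadj v₁ _ (hdom _ (hvne _)) (fun h => hAne h.symm))
  have t3 := hf (qadj v₁ _ (hdom _ (hvne _)) (fun h => hBne h.symm))
  exact tree_no_triangle' hT.IsAcyclic t1 t3.symm t2
end

section
/- Let c be a positive integer, let F be a double-fan on at least 8c² + 2c + 1 vertices with centres v₁, v₂, and let 𝒫, 𝒬 be partitions of F such that 𝒫 is a tree-partition and |P ∩ Q| ≤ c for all P ∈ 𝒫 and Q ∈ 𝒬. If v₁ and v₂ lie in distinct parts of 𝒫 and in distinct parts of 𝒬, then there exist vertices v₃, v₄ such that {v₁, v₂, v₃, v₄} is a 4-clique in F and the parts of 𝒬 containing v₁, v₂, v₃, v₄ are pairwise distinct. -/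
open SimpleGraph

lemma acyclic_no_triangle {ι : Type} {T : SimpleGraph ι} (h : T.IsAcyclic) {a b c : ι}
    (hab : T.Adj a b) (hbc : T.Adj b c) (hca : T.Adj c a) : False := by
  apply h (Walk.cons hab (Walk.cons hbc (Walk.cons hca Walk.nil)))
  have h1 := hab.ne; have h2 := hbc.ne; have h3 := hca.ne
  simp [Walk.isCycle_def, Walk.isTrail_def, Sym2.eq, Sym2.rel_iff']
  aesop


/-- For a double-fan `F` on at least `8c² + 2c + 1` vertices with centres `v₁, v₂`, and
partitions `𝒫, 𝒬` of `F` with `𝒫` a tree-partition and `|P ∩ Q| ≤ c` for all `P ∈ 𝒫`,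
`Q ∈ 𝒬`: if `v₁, v₂` lie in distinct parts of `𝒫` and of `𝒬`, then there are vertices
`v₃, v₄` such that `{v₁, v₂, v₃, v₄}` is a `4`-clique whose vertices lie in pairwise
distinct parts of `𝒬`. -/
theorem stmt11 {V : Type} [Fintype V] (c : ℕ) (hc : 1 ≤ c)
    (F : SimpleGraph V) (hcard : 8 * c ^ 2 + 2 * c + 1 ≤ Fintype.card V)
    (v₁ v₂ : V) (hne : v₁ ≠ v₂)
    (hdom₁ : ∀ w, w ≠ v₁ → F.Adj v₁ w) (hdom₂ : ∀ w, w ≠ v₂ → F.Adj v₂ w)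
    (hpath : IsPathGraph (F.induce {w | w ≠ v₁ ∧ w ≠ v₂}))
    (P Q : Set (Set V)) (hP : IsTreePartition F P) (hQ : Setoid.IsPartition Q)
    (hPQ : ∀ p ∈ P, ∀ q ∈ Q, (p ∩ q).ncard ≤ c)
    (hPsep : ∀ p ∈ P, v₁ ∈ p → v₂ ∉ p) (hQsep : ∀ q ∈ Q, v₁ ∈ q → v₂ ∉ q) :
    ∃ v₃ v₄, F.Adj v₁ v₂ ∧ F.Adj v₁ v₃ ∧ F.Adj v₁ v₄ ∧
      F.Adj v₂ v₃ ∧ F.Adj v₂ v₄ ∧ F.Adj v₃ v₄ ∧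
      (∀ q ∈ Q, v₁ ∈ q → v₂ ∉ q) ∧ (∀ q ∈ Q, v₁ ∈ q → v₃ ∉ q) ∧
      (∀ q ∈ Q, v₁ ∈ q → v₄ ∉ q) ∧ (∀ q ∈ Q, v₂ ∈ q → v₃ ∉ q) ∧
      (∀ q ∈ Q, v₂ ∈ q → v₄ ∉ q) ∧ (∀ q ∈ Q, v₃ ∈ q → v₄ ∉ q) := by
  classical
  by_contra hcon
  -- the Q-part function
  have hQex := hQ.2
  set p : V → Set V := fun a => (hQex a).choose with hp_def
  have hp1 : ∀ a, p a ∈ Q := fun a => (hQex a).choose_spec.1.1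
  have hp2 : ∀ a, a ∈ p a := fun a => (hQex a).choose_spec.1.2
  have hpu : ∀ a q, q ∈ Q → a ∈ q → q = p a := fun a q hq ha =>
    (hQex a).choose_spec.2 q ⟨hq, ha⟩
  -- the P-part function
  obtain ⟨hPpart, ι, T, hT, f, hf⟩ := hP
  have hPex := hPpart.2
  set pP : V → Set V := fun a => (hPex a).choose with hpP_def
  have hP1 : ∀ a, pP a ∈ P := fun a => (hPex a).choose_spec.1.1
  have hP2 : ∀ a, a ∈ pP a := fun a => (hPex a).choose_spec.1.2
  -- every vertex lies in pP v₁ ∪ pP v₂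
  have hPall : ∀ w, w ∈ pP v₁ ∨ w ∈ pP v₂ := by
    intro w
    by_contra hw
    push_neg at hw
    have hw1 : w ≠ v₁ := by rintro rfl; exact hw.1 (hP2 _)
    have hw2 : w ≠ v₂ := by rintro rfl; exact hw.2 (hP2 _)
    have h12 : pP v₁ ≠ pP v₂ := by
      intro h
      exact hPsep (pP v₁) (hP1 v₁) (hP2 v₁) (h ▸ hP2 v₂)
    have h13 : pP v₁ ≠ pP w := by
      intro h; exact hw.1 (h ▸ hP2 w)
    have h23 : pP v₂ ≠ pP w := by
      intro h; exact hw.2 (h ▸ hP2 w)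
    have A12 : (QuotientGraph F P).Adj ⟨pP v₁, hP1 v₁⟩ ⟨pP v₂, hP1 v₂⟩ :=
      show _ ∧ _ from ⟨fun hh => h12 (congrArg Subtype.val hh), v₁, hP2 v₁, v₂, hP2 v₂, hdom₁ v₂ hne.symm⟩
    have A23 : (QuotientGraph F P).Adj ⟨pP v₂, hP1 v₂⟩ ⟨pP w, hP1 w⟩ :=
      show _ ∧ _ from ⟨fun hh => h23 (congrArg Subtype.val hh), v₂, hP2 v₂, w, hP2 w, hdom₂ w hw2⟩
    have A31 : (QuotientGraph F P).Adj ⟨pP w, hP1 w⟩ ⟨pP v₁, hP1 v₁⟩ :=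
      show _ ∧ _ from ⟨fun hh => h13 (congrArg Subtype.val hh).symm, w, hP2 w, v₁, hP2 v₁, (hdom₁ w hw1).symm⟩
    exact acyclic_no_triangle hT.IsAcyclic (hf A12) (hf A23) (hf A31)
  -- each Q-part has at most 2c vertices
  have hq2c : ∀ q ∈ Q, q.ncard ≤ 2 * c := by
    intro q hq
    have hsub : q = (q ∩ pP v₁) ∪ (q ∩ pP v₂) := by
      ext x
      simp only [Set.mem_union, Set.mem_inter_iff]
      constructor
      · intro hx; rcases hPall x with h | h
        · exact Or.inl ⟨hx, h⟩
        · exact Or.inr ⟨hx, h⟩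
      · rintro (⟨hx, _⟩ | ⟨hx, _⟩) <;> exact hx
    calc q.ncard = ((q ∩ pP v₁) ∪ (q ∩ pP v₂)).ncard := by rw [← hsub]
      _ ≤ (q ∩ pP v₁).ncard + (q ∩ pP v₂).ncard := Set.ncard_union_le _ _
      _ ≤ c + c := by
          have h1 := hPQ (pP v₁) (hP1 v₁) q hq
          have h2 := hPQ (pP v₂) (hP1 v₂) q hq
          rw [Set.inter_comm] at h1 h2
          omega
      _ = 2 * c := by omega
  -- the path
  obtain ⟨n, ⟨e⟩⟩ := hpath
  set S : Set V := {w | w ≠ v₁ ∧ w ≠ v₂} with hS_def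
  have hcardS : Nat.card S = n := by
    rw [Nat.card_congr e.toEquiv]; simp
  have hcompl : S = ({v₁, v₂} : Set V)ᶜ := by
    ext x; simp [hS_def]
  have hn2 : n + 2 = Fintype.card V := by
    have := Set.ncard_add_ncard_compl ({v₁, v₂} : Set V)
    rw [Set.ncard_pair hne] at this
    rw [← hcompl, ← Nat.card_coe_set_eq, hcardS] at this
    rw [Nat.card_eq_fintype_card] at this
    omega
  have harith : (4 * c - 1) * (2 * c + 1) + 2 ≤ 8 * c ^ 2 + 2 * c + 1 := by
    obtain ⟨d, rfl⟩ : ∃ d, c = d + 1 := ⟨c - 1, by omega⟩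
    have h1 : 4 * (d + 1) - 1 = 4 * d + 3 := by omega
    rw [h1]
    nlinarith [sq_nonneg d]
  have hn : (4 * c - 1) * (2 * c + 1) ≤ n := by omega
  -- the vertex sequence along the path
  set u : ℕ → V := fun j => if h : j < n then ((e.symm ⟨j, h⟩ : S) : V) else v₁ with hu_def
  have huS : ∀ j, j < n → u j ≠ v₁ ∧ u j ≠ v₂ := by
    intro j hj
    simp only [hu_def, dif_pos hj]
    exact (e.symm ⟨j, hj⟩).2
  have huinj : ∀ j k, j < n → k < n → u j = u k → j = k := by
    intro j k hj hk hjk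
    simp only [hu_def, dif_pos hj, dif_pos hk] at hjk
    have := e.symm.injective (Subtype.val_injective hjk)
    exact congrArg Fin.val this
  have huadj : ∀ j, j + 1 < n → F.Adj (u j) (u (j + 1)) := by
    intro j hj
    have hj' : j < n := by omega
    have hadj : (pathGraph n).Adj ⟨j, hj'⟩ ⟨j + 1, hj⟩ := by
      rw [pathGraph_adj]; left; rfl
    have := e.symm.map_adj_iff.mpr hadj
    simp only [comap_adj, Function.Embedding.coe_subtype] at this
    simpa only [hu_def, dif_pos hj', dif_pos hj] using this
  -- the "bad" consequence of hcon
  have bad : ∀ j, j + 1 < n → u j ∉ p v₁ → u j ∉ p v₂ → u (j + 1) ∉ p v₁ →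
      u (j + 1) ∉ p v₂ → p (u j) = p (u (j + 1)) := by
    intro j hj h1 h2 h3 h4
    by_contra hne'
    have hj' : j < n := by omega
    refine hcon ⟨u j, u (j + 1), hdom₁ v₂ hne.symm, hdom₁ _ (huS j hj').1,
      hdom₁ _ (huS (j+1) hj).1, hdom₂ _ (huS j hj').2, hdom₂ _ (huS (j+1) hj).2,
      huadj j hj, hQsep, ?_, ?_, ?_, ?_, ?_⟩
    · intro q hq hv hmem
      exact h1 ((hpu v₁ q hq hv) ▸ hmem)
    · intro q hq hv hmem
      exact h3 ((hpu v₁ q hq hv) ▸ hmem)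
    · intro q hq hv hmem
      exact h2 ((hpu v₂ q hq hv) ▸ hmem)
    · intro q hq hv hmem
      exact h4 ((hpu v₂ q hq hv) ▸ hmem)
    · intro q hq hv hmem
      exact hne' ((hpu _ q hq hv).symm.trans (hpu _ q hq hmem))
  -- density: each window of length 2c+1 contains a point of q₁ ∪ q₂
  have run : ∀ k, k < 4 * c - 1 → ∃ j, j < n ∧ (u j ∈ p v₁ ∨ u j ∈ p v₂) ∧
      k * (2 * c + 1) ≤ j ∧ j < k * (2 * c + 1) + (2 * c + 1) := by
    intro k hk
    set a := k * (2 * c + 1) with ha_def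
    have hmul : (k + 1) * (2 * c + 1) ≤ (4 * c - 1) * (2 * c + 1) :=
      Nat.mul_le_mul_right _ (by omega)
    have hsucc : (k + 1) * (2 * c + 1) = a + (2 * c + 1) := by
      rw [ha_def]; ring
    have ha : a + 2 * c < n := by omega
    by_contra hrun
    push_neg at hrun
    have hfree : ∀ t, t ≤ 2 * c → u (a + t) ∉ p v₁ ∧ u (a + t) ∉ p v₂ := by
      intro t ht
      constructor <;> intro hmem
      · have := hrun (a + t) (by omega) (Or.inl hmem) (by omega); omega
      · have := hrun (a + t) (by omega) (Or.inr hmem) (by omega); omega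
    have hconst : ∀ t, t ≤ 2 * c → u (a + t) ∈ p (u a) := by
      intro t ht
      induction t with
      | zero => exact hp2 (u a)
      | succ s ih =>
        have hs : s ≤ 2 * c := by omega
        have heq : p (u (a + s)) = p (u (a + s + 1)) :=
          bad (a + s) (by omega) (hfree s hs).1 (hfree s hs).2
            (hfree (s + 1) ht).1 (hfree (s + 1) ht).2
        have hps : p (u a) = p (u (a + s)) := hpu _ _ (hp1 _) (ih hs)
        have : u (a + s + 1) ∈ p (u (a + s + 1)) := hp2 _
        rw [← heq, ← hps] at this
        exact this
    -- 2c+1 distinct elements in a part of size ≤ 2c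
    have hcard1 : ((Finset.range (2 * c + 1)).image (fun t => u (a + t))).card = 2 * c + 1 := by
      rw [Finset.card_image_of_injOn, Finset.card_range]
      intro s hs t ht hst
      simp only [Finset.coe_range, Set.mem_Iio] at hs ht
      have := huinj (a + s) (a + t) (by omega) (by omega) hst
      omega
    have hcard2 : (2 * c + 1 : ℕ) ≤ (p (u a)).ncard := by
      rw [← hcard1, ← Set.ncard_coe_finset]
      apply Set.ncard_le_ncard _ (Set.toFinite _)
      intro x hx
      simp only [Finset.coe_image, Finset.coe_range, Set.mem_image, Set.mem_Iio] at hx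
      obtain ⟨t, ht, rfl⟩ := hx
      exact hconst t (by omega)
    have := hq2c (p (u a)) (hp1 _)
    omega
  -- count: at least 4c-1 indices in q₁ ∪ q₂
  set Bn : Finset ℕ := (Finset.range n).filter (fun j => u j ∈ p v₁ ∨ u j ∈ p v₂) with hBn_def
  have hBbig : 4 * c - 1 ≤ Bn.card := by
    have hchoose : ∀ k : ℕ, ∃ j, k < 4 * c - 1 → (j < n ∧ (u j ∈ p v₁ ∨ u j ∈ p v₂) ∧
        k * (2 * c + 1) ≤ j ∧ j < k * (2 * c + 1) + (2 * c + 1)) := by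
      intro k
      by_cases hk : k < 4 * c - 1
      · obtain ⟨j, hj⟩ := run k hk
        exact ⟨j, fun _ => hj⟩
      · exact ⟨0, fun h => absurd h hk⟩
    choose g hg using hchoose
    calc 4 * c - 1 = (Finset.range (4 * c - 1)).card := (Finset.card_range _).symm
      _ ≤ Bn.card := by
        apply Finset.card_le_card_of_injOn g
        · intro k hk
          simp only [Finset.coe_range, Set.mem_Iio] at hk
          obtain ⟨h1, h2, _, _⟩ := hg k hk
          simp only [Finset.mem_coe, hBn_def, Finset.mem_filter, Finset.mem_range]
          exact ⟨h1, h2⟩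
        · intro k hk k' hk' hkk
          simp only [Finset.coe_range, Set.mem_Iio] at hk hk'
          obtain ⟨_, _, h3, h4⟩ := hg k hk
          obtain ⟨_, _, h3', h4'⟩ := hg k' hk'
          have em : (k + 1) * (2 * c + 1) = k * (2 * c + 1) + (2 * c + 1) := by ring
          have em' : (k' + 1) * (2 * c + 1) = k' * (2 * c + 1) + (2 * c + 1) := by ring
          have e1 : g k / (2 * c + 1) = k := Nat.div_eq_of_lt_le h3 (by omega)
          have e2 : g k' / (2 * c + 1) = k' := Nat.div_eq_of_lt_le h3' (by omega)
          rw [← e1, ← e2, hkk]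
  -- count: at most 4c-2 such indices
  have hBsmall : Bn.card ≤ 4 * c - 2 := by
    have hsplit : Bn = ((Finset.range n).filter (fun j => u j ∈ p v₁)) ∪
        ((Finset.range n).filter (fun j => u j ∈ p v₂)) := by
      rw [hBn_def, Finset.filter_or]
    have hone : ∀ v : V, v ∈ ({v₁, v₂} : Set V) → ∀ hv : v ∈ p v,
        ((Finset.range n).filter (fun j => u j ∈ p v)).card ≤ 2 * c - 1 := by
      intro v hv hvp
      have hdiff : ((p v) \ {v}).ncard + 1 = (p v).ncard :=
        Set.ncard_diff_singleton_add_one hvp (Set.toFinite _)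
      have hle : ((Finset.range n).filter (fun j => u j ∈ p v)).card ≤ ((p v) \ {v}).ncard := by
        rw [Set.ncard_eq_toFinset_card']
        apply Finset.card_le_card_of_injOn u
        · intro j hj
          simp only [Finset.coe_filter, Finset.mem_range, Set.mem_setOf_eq] at hj
          rw [Finset.mem_coe, Set.mem_toFinset]
          refine ⟨hj.2, ?_⟩
          simp only [Set.mem_singleton_iff]
          rcases hv with rfl | hv
          · exact (huS j hj.1).1
          · simp only [Set.mem_singleton_iff] at hv
            subst hv
            exact (huS j hj.1).2
        · intro j hj k hk hjk
          simp only [Finset.coe_filter, Finset.mem_range, Set.mem_setOf_eq] at hj hk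
          exact huinj j k hj.1 hk.1 hjk
      have := hq2c (p v) (hp1 v)
      omega
    calc Bn.card ≤ ((Finset.range n).filter (fun j => u j ∈ p v₁)).card +
        ((Finset.range n).filter (fun j => u j ∈ p v₂)).card := by
          rw [hsplit]; exact Finset.card_union_le _ _
      _ ≤ (2 * c - 1) + (2 * c - 1) := by
          have h1 := hone v₁ (by simp) (hp2 v₁)
          have h2 := hone v₂ (by simp) (hp2 v₂)
          omega
      _ ≤ 4 * c - 2 := by omega
  omega
end

section
/- For any graph G and any distension Ĝ of G, tw(Ĝ) ≤ max{tw(G), 3}. -/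
open SimpleGraph

section Helpers

lemma exists_two_nbrs_start {V : Type} {G : SimpleGraph V} {x : V} (c : G.Walk x x)
    (hc : c.IsCycle) : ∃ y z, y ≠ z ∧ s(x,y) ∈ c.edges ∧ s(x,z) ∈ c.edges := by
  cases c with
  | nil => exact absurd rfl hc.ne_nil
  | @cons _ u _ h p =>
    rw [SimpleGraph.Walk.cons_isCycle_iff] at hc
    obtain ⟨hpath, hne⟩ := hc
    have hrnil : ¬ p.reverse.Nil := SimpleGraph.Walk.not_nil_of_ne h.ne
    obtain ⟨z, h2, q, hq⟩ := SimpleGraph.Walk.not_nil_iff.mp hrnil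
    have hz : s(x,z) ∈ p.edges := by
      have : s(x,z) ∈ p.reverse.edges := by
        rw [hq]; simp [SimpleGraph.Walk.edges_cons]
      rwa [SimpleGraph.Walk.edges_reverse, List.mem_reverse] at this
    refine ⟨u, z, ?_, ?_, List.mem_cons_of_mem _ hz⟩
    · rintro rfl; exact hne hz
    · simp [SimpleGraph.Walk.edges_cons]

lemma exists_two_nbrs {V : Type} {G : SimpleGraph V} {v x : V} {c : G.Walk v v}
    (hc : c.IsCycle) (hx : x ∈ c.support) :
    ∃ y z, y ≠ z ∧ s(x,y) ∈ c.edges ∧ s(x,z) ∈ c.edges := by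
  classical
  obtain ⟨y, z, hyz, hy, hz⟩ := exists_two_nbrs_start (c.rotate x hx) (hc.rotate hx)
  have hperm := (SimpleGraph.Walk.rotate_edges c x hx).mem_iff (a := s(x,y))
  have hperm' := (SimpleGraph.Walk.rotate_edges c x hx).mem_iff (a := s(x,z))
  exact ⟨y, z, hyz, hperm.mp hy, hperm'.mp hz⟩

lemma walk_pullback {V W : Type} {G : SimpleGraph V} {H : SimpleGraph W} (f : V → W)
    (hinj : Function.Injective f) (hadj : ∀ u v, G.Adj u v ↔ H.Adj (f u) (f v)) :
    ∀ {x y : W} (p : H.Walk x y), (∀ z ∈ p.support, z ∈ Set.range f) →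
      ∀ a b, (ha : f a = x) → (hb : f b = y) →
      ∃ q : G.Walk a b,
        q.map ⟨f, fun h => (hadj _ _).mp h⟩ = p.copy ha.symm hb.symm := by
  intro x y p
  induction p with
  | nil =>
    intro _ a b ha hb
    have : a = b := hinj (ha.trans hb.symm)
    subst this
    subst ha
    exact ⟨SimpleGraph.Walk.nil, by simp [SimpleGraph.Walk.copy_nil]⟩
  | @cons x' u' y' h p ih =>
    intro hsupp a b ha hb
    subst ha
    obtain ⟨a', ha'⟩ := hsupp u' (by simp [SimpleGraph.Walk.support_cons])
    have hGa : G.Adj a a' := (hadj _ _).mpr (ha' ▸ h)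
    obtain ⟨q, hq⟩ := ih (fun z hz => hsupp z (by simp [SimpleGraph.Walk.support_cons, hz]))
      a' b ha' hb
    refine ⟨SimpleGraph.Walk.cons hGa q, ?_⟩
    rw [SimpleGraph.Walk.map_cons, hq]
    subst ha'
    rw [SimpleGraph.Walk.copy_cons]

lemma pullback_acyclic {V W : Type} {G : SimpleGraph V} {H : SimpleGraph W} (f : V → W)
    (hinj : Function.Injective f) (hadj : ∀ u v, G.Adj u v ↔ H.Adj (f u) (f v))
    (hG : G.IsAcyclic) {x : W} (c : H.Walk x x) (hc : c.IsCycle)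
    (hsupp : ∀ z ∈ c.support, z ∈ Set.range f) : False := by
  obtain ⟨a, ha⟩ := hsupp x c.start_mem_support
  obtain ⟨q, hq⟩ := walk_pullback f hinj hadj c hsupp a a ha ha
  have hcyc : (q.map ⟨f, fun h => (hadj _ _).mp h⟩).IsCycle := by
    rw [hq]
    exact (SimpleGraph.Walk.isCycle_copy c ha.symm).mpr hc
  exact hG _ ((SimpleGraph.Walk.map_isCycle_iff_of_injective hinj).mp hcyc)

lemma path_ord {β : Type} (G' : SimpleGraph β) (s : Set β) (h : IsPathGraph (G'.induce s)) :
    ∃ ord : β → ℕ,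
      (∀ w ∈ s, ∀ w' ∈ s, (G'.Adj w w' ↔ (ord w + 1 = ord w' ∨ ord w' + 1 = ord w))) ∧
      (∀ w ∈ s, ∀ w' ∈ s, ord w = ord w' → w = w') ∧
      (∀ w ∈ s, ord w ≠ 0 → ∃ w' ∈ s, ord w' + 1 = ord w) := by
  classical
  obtain ⟨n, ⟨φ⟩⟩ := h
  refine ⟨fun w => if hw : w ∈ s then (φ ⟨w, hw⟩).val else 0, ?_, ?_, ?_⟩
  · intro w hw w' hw'
    simp only [dif_pos hw, dif_pos hw']
    rw [show G'.Adj w w' ↔ (G'.induce s).Adj ⟨w, hw⟩ ⟨w', hw'⟩ from Iff.rfl,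
      ← φ.map_adj_iff, pathGraph_adj]
  · intro w hw w' hw' heq
    simp only [dif_pos hw, dif_pos hw'] at heq
    have : φ ⟨w, hw⟩ = φ ⟨w', hw'⟩ := Fin.ext heq
    exact congrArg Subtype.val (φ.injective this)
  · intro w hw h0
    simp only [dif_pos hw] at h0
    have hlt : (φ ⟨w, hw⟩).val < n := (φ ⟨w, hw⟩).isLt
    set x := φ.symm ⟨(φ ⟨w, hw⟩).val - 1, by omega⟩ with hx
    refine ⟨x.1, x.2, ?_⟩
    simp only [dif_pos hw, dif_pos x.2]
    have hxx : φ ⟨x.1, x.2⟩ = ⟨(φ ⟨w, hw⟩).val - 1, by omega⟩ := by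
      rw [hx]; exact φ.apply_symm_apply _
    rw [hxx]
    simp only []
    omega

end Helpers

/-- For any graph `G` and any distension `G'` of `G`, `tw(G') ≤ max {tw(G), 3}`. -/
theorem stmt14 {α β : Type} [Fintype α] [Fintype β]
    (G : SimpleGraph α) (G' : SimpleGraph β) (h : IsDistension G G')
    (k : ℕ) (hk : HasTreewidthLE G k) : HasTreewidthLE G' (max k 3) := by
  classical
  obtain ⟨g, f, hg, hedge, hadjg, hsame, hpaths⟩ := h
  obtain ⟨ι, T, B, hT, hcover, htrace, hbags⟩ := hk
  -- extract a linear ordering of each added path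
  have hORD : ∀ e : Sym2 α, ∃ o : β → ℕ, e ∈ G.edgeSet →
      ((∀ w ∈ {w : β | w ∉ Set.range g ∧ f w = e}, ∀ w' ∈ {w : β | w ∉ Set.range g ∧ f w = e},
        (G'.Adj w w' ↔ (o w + 1 = o w' ∨ o w' + 1 = o w))) ∧
      (∀ w ∈ {w : β | w ∉ Set.range g ∧ f w = e}, ∀ w' ∈ {w : β | w ∉ Set.range g ∧ f w = e},
        o w = o w' → w = w') ∧
      (∀ w ∈ {w : β | w ∉ Set.range g ∧ f w = e}, o w ≠ 0 →
        ∃ w' ∈ {w : β | w ∉ Set.range g ∧ f w = e}, o w' + 1 = o w)) := by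
    intro e
    by_cases he : e ∈ G.edgeSet
    · obtain ⟨o, h1, h2, h3⟩ := path_ord G' _ (hpaths e he).2
      exact ⟨o, fun _ => ⟨h1, h2, h3⟩⟩
    · exact ⟨fun _ => 0, fun hco => absurd hco he⟩
  choose ORD hORD using hORD
  -- the set of added (path) vertices
  obtain ⟨o, hadj2, hinj2, hdesc2⟩ :
      ∃ o : β → ℕ,
        (∀ w w' : {w : β // w ∉ Set.range g}, f w.1 = f w'.1 →
          (G'.Adj w.1 w'.1 ↔ (o w.1 + 1 = o w'.1 ∨ o w'.1 + 1 = o w.1))) ∧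
        (∀ w w' : {w : β // w ∉ Set.range g}, f w.1 = f w'.1 → o w.1 = o w'.1 → w = w') ∧
        (∀ w : {w : β // w ∉ Set.range g}, o w.1 ≠ 0 →
          ∃ w' : {w : β // w ∉ Set.range g}, f w'.1 = f w.1 ∧ o w'.1 + 1 = o w.1) := by
    refine ⟨fun b => ORD (f b) b, ?_, ?_, ?_⟩
    · intro w w' hf
      have h1 := (hORD (f w.1) (hedge w.1 w.2)).1 w.1 ⟨w.2, rfl⟩ w'.1 ⟨w'.2, hf.symm⟩
      show G'.Adj w.1 w'.1 ↔
        (ORD (f w.1) w.1 + 1 = ORD (f w'.1) w'.1 ∨ ORD (f w'.1) w'.1 + 1 = ORD (f w.1) w.1)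
      rw [h1, show f w'.1 = f w.1 from hf.symm]
    · intro w w' hf heq
      have h2 := (hORD (f w.1) (hedge w.1 w.2)).2.1 w.1 ⟨w.2, rfl⟩ w'.1 ⟨w'.2, hf.symm⟩
      have heq' : ORD (f w.1) w.1 = ORD (f w'.1) w'.1 := heq
      have : ORD (f w'.1) w'.1 = ORD (f w.1) w'.1 := by rw [hf]
      exact Subtype.ext (h2 (by rw [heq', this]))
    · intro w h0
      have h0' : ORD (f w.1) w.1 ≠ 0 := h0
      obtain ⟨w', hw', hww'⟩ := (hORD (f w.1) (hedge w.1 w.2)).2.2 w.1 ⟨w.2, rfl⟩ h0'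
      refine ⟨⟨w', hw'.1⟩, hw'.2, ?_⟩
      show ORD (f w') w' + 1 = ORD (f w.1) w.1
      rw [show f w' = f w.1 from hw'.2]
      exact hww'
  choose prv hprvf hprvo using hdesc2
  have prv_adj : ∀ (w : {w : β // w ∉ Set.range g}) (h0 : o w.1 ≠ 0),
      G'.Adj (prv w h0).1 w.1 := fun w h0 =>
    (hadj2 (prv w h0) w (hprvf w h0)).mpr (Or.inl (hprvo w h0))
  have prv_unique : ∀ (w : {w : β // w ∉ Set.range g}) (h0 : o w.1 ≠ 0)
      (w' : {w : β // w ∉ Set.range g}), f w'.1 = f w.1 → o w'.1 + 1 = o w.1 →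
      w' = prv w h0 := by
    intro w h0 w' hf ho
    refine hinj2 w' (prv w h0) (by rw [hf, hprvf]) ?_
    have := hprvo w h0
    omega
  -- the root bag for each original edge
  have hι : Nonempty ι := hT.isConnected.nonempty
  obtain ⟨rt, hrt⟩ : ∃ rt : Sym2 α → ι, ∀ e ∈ G.edgeSet, ∀ a ∈ e, a ∈ B (rt e) := by
    have : ∀ e : Sym2 α, ∃ i : ι, e ∈ G.edgeSet → ∀ a ∈ e, a ∈ B i := by
      intro e
      induction e using Sym2.ind with
      | _ u v =>
        by_cases he : s(u, v) ∈ G.edgeSet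
        · obtain ⟨i, hu, hv⟩ := hcover ((SimpleGraph.mem_edgeSet G).mp he)
          refine ⟨i, fun _ a ha => ?_⟩
          rcases Sym2.mem_iff.mp ha with rfl | rfl
          · exact hu
          · exact hv
        · exact ⟨Classical.choice hι, fun hco => absurd hco he⟩
    choose rt hrt using this
    exact ⟨rt, hrt⟩
  -- the new tree
  let T' : SimpleGraph (ι ⊕ {w : β // w ∉ Set.range g}) :=
    { Adj := fun x y => match x, y with
        | Sum.inl i, Sum.inl j => T.Adj i j
        | Sum.inl i, Sum.inr w => o w.1 = 0 ∧ rt (f w.1) = i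
        | Sum.inr w, Sum.inl i => o w.1 = 0 ∧ rt (f w.1) = i
        | Sum.inr w, Sum.inr w' => G'.Adj w.1 w'.1
      symm := ⟨by
        rintro (i | w) (j | w') h
        · exact T.symm.symm _ _ h
        · exact h
        · exact h
        · exact G'.symm.symm _ _ h⟩
      loopless := ⟨by
        rintro (i | w) h
        · exact T.loopless.irrefl i h
        · exact G'.loopless.irrefl w.1 h⟩ }
  -- the new bags
  let C : ι ⊕ {w : β // w ∉ Set.range g} → Set β := fun x => match x with
    | Sum.inl i => g '' (B i)
    | Sum.inr w => insert w.1
        ((if h0 : o w.1 = 0 then (∅ : Set β) else {(prv w h0).1}) ∪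
          g '' {a | a ∈ (f w.1 : Sym2 α)})
  refine ⟨ι ⊕ {w : β // w ∉ Set.range g}, T', C, ⟨?conn, ?acyc⟩, ?cover, ?traces, ?card⟩
  case conn =>
    have reachRoot : ∀ w : {w : β // w ∉ Set.range g},
        T'.Reachable (Sum.inr w) (Sum.inl (rt (f w.1))) := by
      have main : ∀ n (w : {w : β // w ∉ Set.range g}), o w.1 = n →
          T'.Reachable (Sum.inr w) (Sum.inl (rt (f w.1))) := by
        intro n
        induction n using Nat.strong_induction_on with
        | _ n ih =>
          intro w hw
          by_cases h0 : o w.1 = 0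
          · exact SimpleGraph.Adj.reachable
              (show T'.Adj (Sum.inr w) (Sum.inl (rt (f w.1))) from ⟨h0, rfl⟩)
          · have h1 : T'.Adj (Sum.inr (prv w h0)) (Sum.inr w) := prv_adj w h0
            have h2 := ih (o (prv w h0).1) (by have := hprvo w h0; omega) (prv w h0) rfl
            have h3 : Sum.inl (rt (f (prv w h0).1)) =
                (Sum.inl (rt (f w.1)) : ι ⊕ {w : β // w ∉ Set.range g}) := by
              rw [hprvf w h0]
            exact (SimpleGraph.Adj.reachable h1.symm).trans (h3 ▸ h2)
      exact fun w => main (o w.1) w rfl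
    haveI : Nonempty (ι ⊕ {w : β // w ∉ Set.range g}) := ⟨Sum.inl (Classical.choice hι)⟩
    refine ⟨fun x y => ?_⟩
    have anchor : ∀ x : ι ⊕ {w : β // w ∉ Set.range g}, ∃ i : ι, T'.Reachable x (Sum.inl i) := by
      rintro (i | w)
      · exact ⟨i, SimpleGraph.Reachable.refl _⟩
      · exact ⟨rt (f w.1), reachRoot w⟩
    obtain ⟨i, hi⟩ := anchor x
    obtain ⟨j, hj⟩ := anchor y
    have hmap : T'.Reachable (Sum.inl i) (Sum.inl j) :=
      (hT.isConnected.preconnected i j).map ⟨Sum.inl, fun {a b} hab => hab⟩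
    exact (hi.trans hmap).trans hj.symm
  case acyc =>
    intro x0 c hc
    rcases Classical.em (∃ w : {w : β // w ∉ Set.range g}, Sum.inr w ∈ c.support) with hex | hex
    · have hfin : {w : {w : β // w ∉ Set.range g} | Sum.inr w ∈ c.support}.Finite :=
        Set.toFinite _
      obtain ⟨w, hwQ, hmax⟩ := Set.Finite.exists_maximalFor (fun w => o w.1) _ hfin hex
      obtain ⟨y, z, hyz, hy, hz⟩ := exists_two_nbrs hc hwQ
      have key : ∀ u, T'.Adj (Sum.inr w) u → u ∈ c.support →
          u = (if h0 : o w.1 = 0 then Sum.inl (rt (f w.1)) else Sum.inr (prv w h0)) := by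
        rintro (i | w') hadj hsup
        · obtain ⟨h0, hi⟩ := hadj
          rw [dif_pos h0, hi]
        · have hf : f w.1 = f w'.1 := hsame w.1 w'.1 w.2 w'.2 hadj
          rcases (hadj2 w w' hf).mp hadj with hcs | hcs
          · exact absurd (show o w'.1 ≤ o w.1 from @hmax w' hsup (show o w.1 ≤ o w'.1 by omega)) (by omega)
          · have h0 : o w.1 ≠ 0 := by omega
            rw [dif_neg h0]
            exact congrArg Sum.inr (prv_unique w h0 w' hf.symm hcs)
      have hyadj : T'.Adj (Sum.inr w) y := c.adj_of_mem_edges hy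
      have hzadj : T'.Adj (Sum.inr w) z := c.adj_of_mem_edges hz
      have hysup : y ∈ c.support := SimpleGraph.Walk.snd_mem_support_of_mem_edges c hy
      have hzsup : z ∈ c.support := SimpleGraph.Walk.snd_mem_support_of_mem_edges c hz
      exact hyz ((key y hyadj hysup).trans (key z hzadj hzsup).symm)
    · refine pullback_acyclic (G := T) Sum.inl Sum.inl_injective (fun i j => Iff.rfl)
        hT.2 c hc ?_
      intro z hzs
      cases z with
      | inl i => exact ⟨i, rfl⟩
      | inr w => exact absurd ⟨w, hzs⟩ hex
  case cover =>
    intro u v huv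
    by_cases hu : u ∈ Set.range g <;> by_cases hv : v ∈ Set.range g
    · obtain ⟨a, rfl⟩ := hu
      obtain ⟨b, rfl⟩ := hv
      obtain ⟨i, hai, hbi⟩ := hcover ((hg a b).mp huv)
      exact ⟨Sum.inl i, ⟨a, hai, rfl⟩, ⟨b, hbi, rfl⟩⟩
    · obtain ⟨a, rfl⟩ := hu
      have hm : a ∈ (f v : Sym2 α) := (hadjg v hv a).mp huv.symm
      exact ⟨Sum.inr ⟨v, hv⟩,
        Set.mem_insert_iff.mpr (Or.inr (Set.mem_union_right _ ⟨a, hm, rfl⟩)),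
        Set.mem_insert _ _⟩
    · obtain ⟨b, rfl⟩ := hv
      have hm : b ∈ (f u : Sym2 α) := (hadjg u hu b).mp huv
      exact ⟨Sum.inr ⟨u, hu⟩, Set.mem_insert _ _,
        Set.mem_insert_iff.mpr (Or.inr (Set.mem_union_right _ ⟨b, hm, rfl⟩))⟩
    · have hf : f u = f v := hsame u v hu hv huv
      rcases (hadj2 ⟨u, hu⟩ ⟨v, hv⟩ hf).mp huv with hcase | hcase
      · have hcase' : o u + 1 = o v := hcase
        have h0 : o v ≠ 0 := by omega
        have heq : (⟨u, hu⟩ : {w : β // w ∉ Set.range g}) = prv ⟨v, hv⟩ h0 :=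
          prv_unique ⟨v, hv⟩ h0 ⟨u, hu⟩ hf hcase
        refine ⟨Sum.inr ⟨v, hv⟩, ?_, Set.mem_insert _ _⟩
        refine Set.mem_insert_iff.mpr (Or.inr (Set.mem_union_left _ ?_))
        rw [dif_neg h0]
        exact Set.mem_singleton_iff.mpr (congrArg Subtype.val heq)
      · have hcase' : o v + 1 = o u := hcase
        have h0 : o u ≠ 0 := by omega
        have heq : (⟨v, hv⟩ : {w : β // w ∉ Set.range g}) = prv ⟨u, hu⟩ h0 :=
          prv_unique ⟨u, hu⟩ h0 ⟨v, hv⟩ hf.symm hcase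
        refine ⟨Sum.inr ⟨u, hu⟩, Set.mem_insert _ _, ?_⟩
        refine Set.mem_insert_iff.mpr (Or.inr (Set.mem_union_left _ ?_))
        rw [dif_neg h0]
        exact Set.mem_singleton_iff.mpr (congrArg Subtype.val heq)
  case traces =>
    intro b
    rcases Classical.em (b ∈ Set.range g) with hb | hb
    · obtain ⟨a, rfl⟩ := hb
      have hCl : ∀ i : ι, (Sum.inl i ∈ {x | g a ∈ C x}) ↔ a ∈ B i := by
        intro i
        constructor
        · rintro ⟨u, hu, hgu⟩
          rwa [← g.injective hgu]
        · intro hmem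
          exact ⟨a, hmem, rfl⟩
      have hCr : ∀ w : {w : β // w ∉ Set.range g},
          (Sum.inr w ∈ {x | g a ∈ C x}) ↔ a ∈ (f w.1 : Sym2 α) := by
        intro w
        constructor
        · intro hx
          rcases Set.mem_insert_iff.mp hx with hh | hh
          · exact absurd ⟨a, hh⟩ w.2
          · rcases hh with hh | hh
            · by_cases h0 : o w.1 = 0
              · rw [dif_pos h0] at hh
                exact absurd hh (Set.notMem_empty _)
              · rw [dif_neg h0] at hh
                exact absurd ⟨a, Set.mem_singleton_iff.mp hh⟩ (prv w h0).2
            · obtain ⟨a', ha', hgeq⟩ := hh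
              rwa [← g.injective hgeq]
        · intro hmem
          exact Set.mem_insert_iff.mpr (Or.inr (Set.mem_union_right _ ⟨a, hmem, rfl⟩))
      have hroot_mem : ∀ w : {w : β // w ∉ Set.range g}, a ∈ (f w.1 : Sym2 α) →
          a ∈ B (rt (f w.1)) := fun w hw => hrt (f w.1) (hedge w.1 w.2) a hw
      have hA : ∀ (i j : ι) (hi : a ∈ B i) (hj : a ∈ B j),
          (T'.induce {x | g a ∈ C x}).Reachable ⟨Sum.inl i, (hCl i).mpr hi⟩
            ⟨Sum.inl j, (hCl j).mpr hj⟩ := by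
        intro i j hi hj
        exact SimpleGraph.Reachable.map
          (⟨fun p => ⟨Sum.inl p.1, (hCl p.1).mpr p.2⟩, fun {p q} hpq => hpq⟩ :
            T.induce {i | a ∈ B i} →g T'.induce {x | g a ∈ C x})
          ((htrace a).preconnected ⟨i, hi⟩ ⟨j, hj⟩)
      have hB : ∀ n (w : {w : β // w ∉ Set.range g}) (hw : a ∈ (f w.1 : Sym2 α)), o w.1 = n →
          (T'.induce {x | g a ∈ C x}).Reachable ⟨Sum.inr w, (hCr w).mpr hw⟩
            ⟨Sum.inl (rt (f w.1)), (hCl _).mpr (hroot_mem w hw)⟩ := by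
        intro n
        induction n using Nat.strong_induction_on with
        | _ n ih =>
          intro w hw hn
          by_cases h0 : o w.1 = 0
          · exact SimpleGraph.Adj.reachable
              (show T'.Adj (Sum.inr w) (Sum.inl (rt (f w.1))) from ⟨h0, rfl⟩)
          · have hw' : a ∈ (f (prv w h0).1 : Sym2 α) := by rw [hprvf w h0]; exact hw
            have hstep : (T'.induce {x | g a ∈ C x}).Adj ⟨Sum.inr (prv w h0), (hCr _).mpr hw'⟩
                ⟨Sum.inr w, (hCr w).mpr hw⟩ := prv_adj w h0
            have hih := ih (o (prv w h0).1) (by have := hprvo w h0; omega) (prv w h0) hw' rfl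
            have hre : (⟨Sum.inl (rt (f (prv w h0).1)), (hCl _).mpr (hroot_mem _ hw')⟩ :
                {x // x ∈ {x | g a ∈ C x}}) =
                ⟨Sum.inl (rt (f w.1)), (hCl _).mpr (hroot_mem w hw)⟩ := by
              apply Subtype.ext
              show Sum.inl (rt (f (prv w h0).1)) = (Sum.inl (rt (f w.1)) : ι ⊕ _)
              rw [hprvf w h0]
            exact (SimpleGraph.Adj.reachable hstep.symm).trans (hre ▸ hih)
      obtain ⟨⟨i0, hi0⟩⟩ := (htrace a).nonempty
      haveI : Nonempty {x // x ∈ {x | g a ∈ C x}} := ⟨⟨Sum.inl i0, (hCl i0).mpr hi0⟩⟩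
      refine ⟨fun x y => ?_⟩
      have hanchor : ∀ x : {y // y ∈ {x | g a ∈ C x}}, ∃ (i : ι) (hi : a ∈ B i),
          (T'.induce {x | g a ∈ C x}).Reachable x ⟨Sum.inl i, (hCl i).mpr hi⟩ := by
        rintro ⟨(i | w), hx⟩
        · exact ⟨i, (hCl i).mp hx, SimpleGraph.Reachable.refl _⟩
        · have hw := (hCr w).mp hx
          exact ⟨rt (f w.1), hroot_mem w hw, hB (o w.1) w hw rfl⟩
      obtain ⟨i, hi, hxi⟩ := hanchor x
      obtain ⟨j, hj, hyj⟩ := hanchor y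
      exact (hxi.trans (hA i j hi hj)).trans hyj.symm
    · have hub : (Sum.inr ⟨b, hb⟩ : ι ⊕ {w : β // w ∉ Set.range g}) ∈ {x | b ∈ C x} :=
        Set.mem_insert _ _
      have hchar : ∀ x, x ∈ {x | b ∈ C x} →
          x = Sum.inr ⟨b, hb⟩ ∨
          ∃ (w : {w : β // w ∉ Set.range g}) (h0 : ¬ o w.1 = 0),
            x = Sum.inr w ∧ (prv w h0).1 = b := by
        rintro (i | w) hx
        · obtain ⟨u, hu, hgu⟩ := hx
          exact absurd ⟨u, hgu⟩ hb
        · rcases Set.mem_insert_iff.mp hx with hh | hh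
          · exact Or.inl (congrArg Sum.inr (Subtype.ext hh.symm))
          · rcases hh with hh | hh
            · by_cases h0 : o w.1 = 0
              · rw [dif_pos h0] at hh
                exact absurd hh (Set.notMem_empty _)
              · rw [dif_neg h0] at hh
                exact Or.inr ⟨w, h0, rfl, (Set.mem_singleton_iff.mp hh).symm⟩
            · obtain ⟨a', _, hgeq⟩ := hh
              exact absurd ⟨a', hgeq⟩ hb
      have hadjhub : ∀ (w : {w : β // w ∉ Set.range g}) (h0 : ¬ o w.1 = 0), (prv w h0).1 = b →
          T'.Adj (Sum.inr ⟨b, hb⟩) (Sum.inr w) := by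
        intro w h0 hp
        show G'.Adj b w.1
        rw [← hp]
        exact prv_adj w h0
      haveI : Nonempty {x // x ∈ {x | b ∈ C x}} := ⟨⟨_, hub⟩⟩
      refine ⟨fun x y => ?_⟩
      have hreach : ∀ x : {y // y ∈ {x | b ∈ C x}},
          (T'.induce {x | b ∈ C x}).Reachable x ⟨Sum.inr ⟨b, hb⟩, hub⟩ := by
        rintro ⟨x, hx⟩
        rcases hchar x hx with rfl | ⟨w, h0, rfl, hp⟩
        · exact SimpleGraph.Reachable.refl _
        · exact (SimpleGraph.Adj.reachable
            (show (T'.induce {x | b ∈ C x}).Adj ⟨Sum.inr ⟨b, hb⟩, hub⟩ ⟨Sum.inr w, hx⟩ from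
              hadjhub w h0 hp)).symm
      exact (hreach x).trans (hreach y).symm
  case card =>
    intro x
    refine ⟨Set.toFinite _, ?_⟩
    have hm3 : 3 ≤ max k 3 := le_max_right k 3
    have hmk : k ≤ max k 3 := le_max_left k 3
    cases x with
    | inl i =>
      have h1 : (g '' B i).ncard ≤ (B i).ncard := Set.ncard_image_le (hbags i).1
      have h2 := (hbags i).2
      show (g '' B i).ncard ≤ max k 3 + 1
      omega
    | inr w =>
      show (insert w.1
        ((if h0 : o w.1 = 0 then (∅ : Set β) else {(prv w h0).1}) ∪
          g '' {a | a ∈ (f w.1 : Sym2 α)})).ncard ≤ max k 3 + 1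
      have h2 : ∀ e : Sym2 α, (g '' {a | a ∈ e}).ncard ≤ 2 := by
        intro e
        induction e using Sym2.ind with
        | _ u v =>
          have hset : {a | a ∈ (s(u, v) : Sym2 α)} = {u, v} := by
            ext a; simp [Sym2.mem_iff]
          rw [hset, Set.image_insert_eq, Set.image_singleton]
          exact le_trans (Set.ncard_insert_le _ _) (by simp)
      have h1 : (if h0 : o w.1 = 0 then (∅ : Set β) else {(prv w h0).1}).ncard ≤ 1 := by
        split
        · simp
        · simp
      have h3 := Set.ncard_insert_le w.1
        ((if h0 : o w.1 = 0 then (∅ : Set β) else {(prv w h0).1}) ∪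
          g '' {a | a ∈ (f w.1 : Sym2 α)})
      have h4 := Set.ncard_union_le
        (if h0 : o w.1 = 0 then (∅ : Set β) else {(prv w h0).1})
        (g '' {a | a ∈ (f w.1 : Sym2 α)})
      have h5 := h2 (f w.1)
      omega
end
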